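/- Let Z ⊆ ℂ ∪ {∞} = ℙ¹(ℂ) with #Z ≥ 5 and suppose z₁, z₂, z₃, z₄, z₅ ∈ Z are distinct points such that both (z₁,z₂,z₃,z₄) and (z₁,z₂,z₃,z₅) are critical 4-tuples of Z. Then any element of PGL₂(ℂ) mapping Z bijectively to itself is the identity. -/

import Mathlib

noncomputable section

/-- The cross ratio of four complex points. -/
def crossRatio (z₁ z₂ z₃ z₄ : ℂ) : ℂ :=
  ((z₁ - z₃) * (z₂ - z₄)) / ((z₁ - z₄) * (z₂ - z₃))

/-- A 4-tuple of distinct elements of `Z` is critical if any 4-tuple of distinct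
elements of `Z` with the same cross ratio is obtained from it by a permutation in
the Klein four-group `V₄ = {id, (12)(34), (13)(24), (14)(23)}`. -/
def IsCritical (Z : Set ℂ) (z₁ z₂ z₃ z₄ : ℂ) : Prop :=
  z₁ ∈ Z ∧ z₂ ∈ Z ∧ z₃ ∈ Z ∧ z₄ ∈ Z ∧
  [z₁, z₂, z₃, z₄].Pairwise (· ≠ ·) ∧
  ∀ y₁ y₂ y₃ y₄ : ℂ, y₁ ∈ Z → y₂ ∈ Z → y₃ ∈ Z → y₄ ∈ Z →
    [y₁, y₂, y₃, y₄].Pairwise (· ≠ ·) →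
    (crossRatio y₁ y₂ y₃ y₄ = crossRatio z₁ z₂ z₃ z₄ ↔
      (y₁, y₂, y₃, y₄) = (z₁, z₂, z₃, z₄) ∨
      (y₁, y₂, y₃, y₄) = (z₂, z₁, z₄, z₃) ∨
      (y₁, y₂, y₃, y₄) = (z₃, z₄, z₁, z₂) ∨
      (y₁, y₂, y₃, y₄) = (z₄, z₃, z₂, z₁))

/-- The embedding `ℂ ↪ ℙ¹(ℂ)`, `z ↦ (z : 1)`. -/
def toP1 (z : ℂ) : Projectivization ℂ (Fin 2 → ℂ) :=
  Projectivization.mk ℂ ![z, 1] (by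
    intro h
    have := congrFun h 1
    simp at this)

/-- The action of `GL₂(ℂ)` on `ℙ¹(ℂ)` (which factors through `PGL₂(ℂ)`). -/
def pact (g : GL (Fin 2) ℂ) (x : Projectivization ℂ (Fin 2 → ℂ)) :
    Projectivization ℂ (Fin 2 → ℂ) :=
  Projectivization.mk ℂ ((g : Matrix (Fin 2) (Fin 2) ℂ).mulVec x.rep) (by
    intro h
    apply x.rep_nonzero
    have h2 := congrArg
      (fun v => ((g⁻¹ : GL (Fin 2) ℂ) : Matrix (Fin 2) (Fin 2) ℂ).mulVec v) h
    simp only [Matrix.mulVec_mulVec, Matrix.mulVec_zero] at h2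
    rwa [show ((g⁻¹ : GL (Fin 2) ℂ) : Matrix (Fin 2) (Fin 2) ℂ) * ↑g = 1 from Units.inv_mul g,
      Matrix.one_mulVec] at h2)

/-! ### Auxiliary lemmas -/

lemma mulVec_ne_zero (g : GL (Fin 2) ℂ) {v : Fin 2 → ℂ} (hv : v ≠ 0) :
    (g : Matrix (Fin 2) (Fin 2) ℂ).mulVec v ≠ 0 := by
  intro h
  apply hv
  have h2 := congrArg
    (fun w => ((g⁻¹ : GL (Fin 2) ℂ) : Matrix (Fin 2) (Fin 2) ℂ).mulVec w) h
  simp only [Matrix.mulVec_mulVec, Matrix.mulVec_zero] at h2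
  rwa [show ((g⁻¹ : GL (Fin 2) ℂ) : Matrix (Fin 2) (Fin 2) ℂ) * ↑g = 1 from Units.inv_mul g,
    Matrix.one_mulVec] at h2

lemma pact_mk (g : GL (Fin 2) ℂ) (v : Fin 2 → ℂ) (hv : v ≠ 0) :
    pact g (Projectivization.mk ℂ v hv) =
      Projectivization.mk ℂ ((g : Matrix (Fin 2) (Fin 2) ℂ).mulVec v) (mulVec_ne_zero g hv) := by
  obtain ⟨a, ha⟩ := Projectivization.exists_smul_eq_mk_rep ℂ v hv
  unfold pact
  rw [Projectivization.mk_eq_mk_iff]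
  exact ⟨a, by rw [← ha, Matrix.mulVec_smul]⟩

lemma toP1_inj {z w : ℂ} (h : toP1 z = toP1 w) : z = w := by
  unfold toP1 at h
  rw [Projectivization.mk_eq_mk_iff] at h
  obtain ⟨a, ha⟩ := h
  have h1 := congrFun ha 1
  have h0 := congrFun ha 0
  simp [Units.smul_def] at h1 h0
  simp [h1] at h0
  exact h0.symm

lemma pact_pact (g h : GL (Fin 2) ℂ) (x : Projectivization ℂ (Fin 2 → ℂ)) :
    pact g (pact h x) = pact (g * h) x := by
  induction x using Projectivization.ind with
  | h v hv =>
    rw [pact_mk, pact_mk, pact_mk]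
    simp only [Matrix.mulVec_mulVec, Units.val_mul]

lemma pact_inj (g : GL (Fin 2) ℂ) : Function.Injective (pact g) := by
  intro x y h
  have h2 : pact g⁻¹ (pact g x) = pact g⁻¹ (pact g y) := by rw [h]
  rw [pact_pact, pact_pact, inv_mul_cancel] at h2
  have hone : ∀ x, pact (1 : GL (Fin 2) ℂ) x = x := by
    intro x
    induction x using Projectivization.ind with
    | h v hv => rw [pact_mk]; simp
  rwa [hone, hone] at h2

/-- Coordinate description of `pact g (toP1 z) = toP1 w`. -/
lemma pact_coord (g : GL (Fin 2) ℂ) (z w : ℂ) (h : pact g (toP1 z) = toP1 w) :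
    ((g : Matrix (Fin 2) (Fin 2) ℂ) 1 0 * z + (g : Matrix (Fin 2) (Fin 2) ℂ) 1 1 ≠ 0) ∧
    w * ((g : Matrix (Fin 2) (Fin 2) ℂ) 1 0 * z + (g : Matrix (Fin 2) (Fin 2) ℂ) 1 1)
      = (g : Matrix (Fin 2) (Fin 2) ℂ) 0 0 * z + (g : Matrix (Fin 2) (Fin 2) ℂ) 0 1 := by
  unfold toP1 at h
  rw [pact_mk, Projectivization.mk_eq_mk_iff] at h
  obtain ⟨a, ha⟩ := h
  have h0 := congrFun ha 0
  have h1 := congrFun ha 1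
  simp [Units.smul_def, Matrix.mulVec, dotProduct, Fin.sum_univ_two] at h0 h1
  constructor
  · rw [← h1]; exact a.ne_zero
  · rw [← h1, ← h0]; ring

/-- Invariance of the cross ratio under Möbius transformations, coordinate form. -/
lemma cr_invar (a b c d : ℂ)
    (z₁ z₂ z₃ z₄ w₁ w₂ w₃ w₄ : ℂ)
    (h14 : z₁ ≠ z₄) (h23 : z₂ ≠ z₃) (g14 : w₁ ≠ w₄) (g23 : w₂ ≠ w₃)
    (t1 : c * z₁ + d ≠ 0) (t2 : c * z₂ + d ≠ 0)
    (t3 : c * z₃ + d ≠ 0) (t4 : c * z₄ + d ≠ 0)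
    (h1 : w₁ * (c * z₁ + d) = a * z₁ + b)
    (h2 : w₂ * (c * z₂ + d) = a * z₂ + b)
    (h3 : w₃ * (c * z₃ + d) = a * z₃ + b)
    (h4 : w₄ * (c * z₄ + d) = a * z₄ + b) :
    crossRatio w₁ w₂ w₃ w₄ = crossRatio z₁ z₂ z₃ z₄ := by
  have e1 : w₁ = (a * z₁ + b) / (c * z₁ + d) := by rw [eq_div_iff t1]; exact h1
  have e2 : w₂ = (a * z₂ + b) / (c * z₂ + d) := by rw [eq_div_iff t2]; exact h2
  have e3 : w₃ = (a * z₃ + b) / (c * z₃ + d) := by rw [eq_div_iff t3]; exact h3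
  have e4 : w₄ = (a * z₄ + b) / (c * z₄ + d) := by rw [eq_div_iff t4]; exact h4
  have hw14 : w₁ - w₄ ≠ 0 := sub_ne_zero.mpr g14
  have hw23 : w₂ - w₃ ≠ 0 := sub_ne_zero.mpr g23
  have hz14 : z₁ - z₄ ≠ 0 := sub_ne_zero.mpr h14
  have hz23 : z₂ - z₃ ≠ 0 := sub_ne_zero.mpr h23
  unfold crossRatio
  rw [div_eq_div_iff (mul_ne_zero hw14 hw23) (mul_ne_zero hz14 hz23)]
  apply mul_right_cancel₀ (mul_ne_zero (mul_ne_zero t1 t2) (mul_ne_zero t3 t4))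
  linear_combination ((z₁ - z₄) * (z₂ - z₃) * ((w₂ - w₄) * (c * z₂ + d) * (c * z₄ + d) * ((c * z₃ + d) * h1 - (c * z₁ + d) * h3) + (a * d - b * c) * (z₁ - z₃) * ((c * z₄ + d) * h2 - (c * z₂ + d) * h4)) - (z₁ - z₃) * (z₂ - z₄) * ((w₂ - w₃) * (c * z₂ + d) * (c * z₃ + d) * ((c * z₄ + d) * h1 - (c * z₁ + d) * h4) + (a * d - b * c) * (z₁ - z₄) * ((c * z₃ + d) * h2 - (c * z₂ + d) * h3)))

/-- A quadratic with three distinct roots vanishes identically. -/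
lemma quad_three_roots (m00 m01 m10 m11 : ℂ) (z₁ z₂ z₃ : ℂ)
    (h12 : z₁ ≠ z₂) (h13 : z₁ ≠ z₃) (h23 : z₂ ≠ z₃)
    (e1 : m00 * z₁ + m01 = (m10 * z₁ + m11) * z₁)
    (e2 : m00 * z₂ + m01 = (m10 * z₂ + m11) * z₂)
    (e3 : m00 * z₃ + m01 = (m10 * z₃ + m11) * z₃) :
    m10 = 0 ∧ m01 = 0 ∧ m00 = m11 := by
  have k12 : (z₁ - z₂) * (m10 * (z₁ + z₂) + m11 - m00) = 0 := by linear_combination e2 - e1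
  have k13 : (z₁ - z₃) * (m10 * (z₁ + z₃) + m11 - m00) = 0 := by linear_combination e3 - e1
  have l12 : m10 * (z₁ + z₂) + m11 - m00 = 0 :=
    (mul_eq_zero.mp k12).resolve_left (sub_ne_zero.mpr h12)
  have l13 : m10 * (z₁ + z₃) + m11 - m00 = 0 :=
    (mul_eq_zero.mp k13).resolve_left (sub_ne_zero.mpr h13)
  have hc : m10 = 0 := by
    have h : m10 * (z₂ - z₃) = 0 := by linear_combination l12 - l13
    exact (mul_eq_zero.mp h).resolve_right (sub_ne_zero.mpr h23)
  have hda : m00 = m11 := by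
    have h : (m00 - m11) * (z₁ - z₂) = 0 := by
      linear_combination e1 - e2 + (z₁*z₁ - z₂*z₂) * hc
    exact sub_eq_zero.mp ((mul_eq_zero.mp h).resolve_right (sub_ne_zero.mpr h12))
  refine ⟨hc, ?_, hda⟩
  linear_combination e1 + z₁ * z₁ * hc - z₁ * hda

/-- The combinatorial step. -/
lemma pick (z₁ z₂ z₃ z₄ z₅ w₁ w₂ w₃ w₄ w₅ : ℂ)
    (d12 : z₁ ≠ z₂) (d13 : z₁ ≠ z₃) (d14 : z₁ ≠ z₄) (d15 : z₁ ≠ z₅)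
    (d23 : z₂ ≠ z₃) (d24 : z₂ ≠ z₄) (d25 : z₂ ≠ z₅)
    (d34 : z₃ ≠ z₄) (d35 : z₃ ≠ z₅) (d45 : z₄ ≠ z₅)
    (D1 : (w₁, w₂, w₃, w₄) = (z₁, z₂, z₃, z₄) ∨
          (w₁, w₂, w₃, w₄) = (z₂, z₁, z₄, z₃) ∨
          (w₁, w₂, w₃, w₄) = (z₃, z₄, z₁, z₂) ∨
          (w₁, w₂, w₃, w₄) = (z₄, z₃, z₂, z₁))
    (D2 : (w₁, w₂, w₃, w₅) = (z₁, z₂, z₃, z₅) ∨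
          (w₁, w₂, w₃, w₅) = (z₂, z₁, z₅, z₃) ∨
          (w₁, w₂, w₃, w₅) = (z₃, z₅, z₁, z₂) ∨
          (w₁, w₂, w₃, w₅) = (z₅, z₃, z₂, z₁)) :
    w₁ = z₁ ∧ w₂ = z₂ ∧ w₃ = z₃ := by
  simp only [Prod.mk.injEq] at D1 D2
  rcases D1 with ⟨e1, e2, e3, e4⟩ | ⟨e1, e2, e3, e4⟩ | ⟨e1, e2, e3, e4⟩ | ⟨e1, e2, e3, e4⟩ <;>
    rcases D2 with ⟨f1, f2, f3, f4⟩ | ⟨f1, f2, f3, f4⟩ | ⟨f1, f2, f3, f4⟩ | ⟨f1, f2, f3, f4⟩ <;>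
    simp_all

theorem stmt9 (Z : Set ℂ) (hZ : 5 ≤ Z.ncard)
    (z₁ z₂ z₃ z₄ z₅ : ℂ) (hd : [z₁, z₂, z₃, z₄, z₅].Pairwise (· ≠ ·))
    (hmem : z₅ ∈ Z)
    (hc1 : IsCritical Z z₁ z₂ z₃ z₄) (hc2 : IsCritical Z z₁ z₂ z₃ z₅)
    (g : GL (Fin 2) ℂ) (hg : Set.BijOn (pact g) (toP1 '' Z) (toP1 '' Z)) :
    ∀ x, pact g x = x := by
  obtain ⟨m1, m2, m3, m4, _, hcr1⟩ := hc1
  obtain ⟨_, _, _, _, _, hcr2⟩ := hc2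
  -- distinctness of the zᵢ
  simp only [List.pairwise_cons, List.mem_cons, List.not_mem_nil, or_false,
    List.mem_singleton, List.Pairwise.nil, and_true, forall_eq_or_imp, forall_eq] at hd
  obtain ⟨⟨d12, d13, d14, d15⟩, ⟨d23, d24, d25⟩, ⟨d34, d35⟩, d45, -⟩ := hd
  -- images of the zᵢ
  have himg : ∀ z ∈ Z, ∃ w ∈ Z, pact g (toP1 z) = toP1 w := by
    intro z hz
    obtain ⟨w, hwZ, hw⟩ := hg.mapsTo ⟨z, hz, rfl⟩
    exact ⟨w, hwZ, hw.symm⟩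
  obtain ⟨w₁, hw1Z, hw1⟩ := himg z₁ m1
  obtain ⟨w₂, hw2Z, hw2⟩ := himg z₂ m2
  obtain ⟨w₃, hw3Z, hw3⟩ := himg z₃ m3
  obtain ⟨w₄, hw4Z, hw4⟩ := himg z₄ m4
  obtain ⟨w₅, hw5Z, hw5⟩ := himg z₅ hmem
  -- distinctness of the wᵢ
  have inj2 : ∀ zi zj wi wj : ℂ, pact g (toP1 zi) = toP1 wi → pact g (toP1 zj) = toP1 wj →
      zi ≠ zj → wi ≠ wj := by
    intro zi zj wi wj hi hj hne heq
    exact hne (toP1_inj (pact_inj g (by rw [hi, hj, heq])))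
  have n12 := inj2 _ _ _ _ hw1 hw2 d12
  have n13 := inj2 _ _ _ _ hw1 hw3 d13
  have n14 := inj2 _ _ _ _ hw1 hw4 d14
  have n15 := inj2 _ _ _ _ hw1 hw5 d15
  have n23 := inj2 _ _ _ _ hw2 hw3 d23
  have n24 := inj2 _ _ _ _ hw2 hw4 d24
  have n25 := inj2 _ _ _ _ hw2 hw5 d25
  have n34 := inj2 _ _ _ _ hw3 hw4 d34
  have n35 := inj2 _ _ _ _ hw3 hw5 d35
  have n45 := inj2 _ _ _ _ hw4 hw5 d45
  -- coordinate form
  obtain ⟨t1, e1⟩ := pact_coord g _ _ hw1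
  obtain ⟨t2, e2⟩ := pact_coord g _ _ hw2
  obtain ⟨t3, e3⟩ := pact_coord g _ _ hw3
  obtain ⟨t4, e4⟩ := pact_coord g _ _ hw4
  obtain ⟨t5, e5⟩ := pact_coord g _ _ hw5
  -- cross ratios are preserved
  have cr1 : crossRatio w₁ w₂ w₃ w₄ = crossRatio z₁ z₂ z₃ z₄ :=
    cr_invar _ _ _ _ _ _ _ _ _ _ _ _ d14 d23 n14 n23 t1 t2 t3 t4 e1 e2 e3 e4
  have cr2 : crossRatio w₁ w₂ w₃ w₅ = crossRatio z₁ z₂ z₃ z₅ :=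
    cr_invar _ _ _ _ _ _ _ _ _ _ _ _ d15 d23 n15 n23 t1 t2 t3 t5 e1 e2 e3 e5
  -- criticality
  have D1 := (hcr1 w₁ w₂ w₃ w₄ hw1Z hw2Z hw3Z hw4Z (by
    simp only [List.pairwise_cons, List.mem_cons, List.not_mem_nil, or_false,
      List.mem_singleton, List.Pairwise.nil, and_true, forall_eq_or_imp, forall_eq]
    exact ⟨⟨n12, n13, n14⟩, ⟨n23, n24⟩, n34, fun _ h => h.elim⟩)).mp cr1
  have D2 := (hcr2 w₁ w₂ w₃ w₅ hw1Z hw2Z hw3Z hw5Z (by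
    simp only [List.pairwise_cons, List.mem_cons, List.not_mem_nil, or_false,
      List.mem_singleton, List.Pairwise.nil, and_true, forall_eq_or_imp, forall_eq]
    exact ⟨⟨n12, n13, n15⟩, ⟨n23, n25⟩, n35, fun _ h => h.elim⟩)).mp cr2
  obtain ⟨f1, f2, f3⟩ :=
    pick z₁ z₂ z₃ z₄ z₅ w₁ w₂ w₃ w₄ w₅ d12 d13 d14 d15 d23 d24 d25 d34 d35 d45 D1 D2
  -- three fixed points: the matrix is scalar
  set M := (g : Matrix (Fin 2) (Fin 2) ℂ) with hM
  rw [f1] at e1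
  rw [f2] at e2
  rw [f3] at e3
  have q1 : M 0 0 * z₁ + M 0 1 = (M 1 0 * z₁ + M 1 1) * z₁ := by linear_combination -e1
  have q2 : M 0 0 * z₂ + M 0 1 = (M 1 0 * z₂ + M 1 1) * z₂ := by linear_combination -e2
  have q3 : M 0 0 * z₃ + M 0 1 = (M 1 0 * z₃ + M 1 1) * z₃ := by linear_combination -e3
  obtain ⟨hm10, hm01, hm⟩ := quad_three_roots _ _ _ _ _ _ _ d12 d13 d23 q1 q2 q3
  have hs : M 1 1 ≠ 0 := by
    intro h0
    have hu : IsUnit M.det := by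
      have := (g : (Matrix (Fin 2) (Fin 2) ℂ)ˣ).isUnit
      rwa [Matrix.isUnit_iff_isUnit_det] at this
    rw [Matrix.det_fin_two, hm, h0, hm01, hm10] at hu
    simp at hu
  intro x
  induction x using Projectivization.ind with
  | h v hv =>
    rw [pact_mk, Projectivization.mk_eq_mk_iff]
    refine ⟨Units.mk0 (M 1 1) hs, ?_⟩
    funext i
    fin_cases i <;>
      simp only [Units.smul_def, Pi.smul_apply, smul_eq_mul, Units.val_mk0,
        Matrix.mulVec, dotProduct, Fin.sum_univ_two, ← hM, hm10, hm01, hm,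
        Matrix.cons_val_zero, Matrix.cons_val_one, Matrix.head_cons, Fin.isValue,
        Fin.mk_zero, Fin.mk_one] <;> ring
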